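/- Let N ≥ 2, Q ≥ 1, and let c, d ∈ ℤ^N be two linearly independent primitive vectors. Then the rank N−1 lattice Λ = { y ∈ ℤ^N : ⟨c,y⟩ = 0 and ⟨d,y⟩ ≡ 0 mod Q } has determinant ‖c‖ · Q / gcd(G(c,d), Q). -/

import Mathlib

noncomputable section

/-- Euclidean inner product of two integer vectors. -/
def idot {ι : Type*} [Fintype ι] (x y : ι → ℤ) : ℤ := ∑ i, x i * y i

lemma idot_add {ι : Type*} [Fintype ι] (c a b : ι → ℤ) :
    idot c (a + b) = idot c a + idot c b := by
  simp [idot, mul_add, Finset.sum_add_distrib]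

lemma idot_smul {ι : Type*} [Fintype ι] (c : ι → ℤ) (m : ℤ) (a : ι → ℤ) :
    idot c (m • a) = m * idot c a := by
  simp [idot, Finset.mul_sum, smul_eq_mul]; ring_nf
  exact Finset.sum_congr rfl fun i _ => by ring

/-- Euclidean norm of an integer vector. -/
def inorm {ι : Type*} [Fintype ι] (x : ι → ℤ) : ℝ := Real.sqrt (∑ i, (x i : ℝ) ^ 2)

/-- The determinant of the lattice spanned by the family `v` (assumed to be a basis),
namely `sqrt (det (Bᵀ B))` where `B` has the `v k` as columns: the square root of the
Gram determinant. -/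
def latDet {ι κ : Type*} [Fintype ι] [Fintype κ] [DecidableEq κ] (v : κ → ι → ℤ) : ℝ :=
  Real.sqrt ((Matrix.det (Matrix.of fun i j => idot (v i) (v j)) : ℤ) : ℝ)

/-- The gcd of all 2×2 minors of the matrix with columns `c₁, c₂`. -/
def minorGcd {ι : Type*} [Fintype ι] (c₁ c₂ : ι → ℤ) : ℤ :=
  Finset.gcd Finset.univ (fun p : ι × ι => c₁ p.1 * c₂ p.2 - c₁ p.2 * c₂ p.1)

/-- The lattice `{ y ∈ ℤ^N : ⟨c,y⟩ = 0 and ⟨d,y⟩ ≡ 0 mod Q }` as a `ℤ`-submodule. -/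
def latMix {N : ℕ} (c d : Fin N → ℤ) (Q : ℕ) : Submodule ℤ (Fin N → ℤ) where
  carrier := {y | idot c y = 0 ∧ (Q : ℤ) ∣ idot d y}
  add_mem' := by
    intro a b ha hb
    exact ⟨by rw [idot_add, ha.1, hb.1, add_zero],
           by rw [idot_add]; exact dvd_add ha.2 hb.2⟩
  zero_mem' := by
    constructor <;> simp [idot]
  smul_mem' := by
    intro m a ha
    exact ⟨by rw [idot_smul, ha.1, mul_zero], by rw [idot_smul]; exact ha.2.mul_left m⟩


/-! ### Auxiliary lemmas -/

lemma idot_comm {ι : Type*} [Fintype ι] (x y : ι → ℤ) : idot x y = idot y x := by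
  simp [idot, mul_comm]

lemma idot_zero {ι : Type*} [Fintype ι] (x : ι → ℤ) : idot x 0 = 0 := by simp [idot]

lemma idot_sum_right {ι κ : Type*} [Fintype ι] (s : Finset κ) (x : ι → ℤ) (f : κ → ι → ℤ) :
    idot x (∑ j ∈ s, f j) = ∑ j ∈ s, idot x (f j) := by
  simp only [idot]
  rw [Finset.sum_comm]
  congr 1; ext i
  rw [← Finset.mul_sum]
  simp

lemma idot_sum_left {ι κ : Type*} [Fintype ι] (s : Finset κ) (f : κ → ι → ℤ) (y : ι → ℤ) :
    idot (∑ j ∈ s, f j) y = ∑ j ∈ s, idot (f j) y := by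
  rw [idot_comm, idot_sum_right]
  simp [idot_comm]

lemma idot_smul_left {ι : Type*} [Fintype ι] (m : ℤ) (a y : ι → ℤ) :
    idot (m • a) y = m * idot a y := by
  rw [idot_comm, idot_smul, idot_comm]

lemma idot_sub' {ι : Type*} [Fintype ι] (c a b : ι → ℤ) :
    idot c (a - b) = idot c a - idot c b := by
  simp [idot, mul_sub, Finset.sum_sub_distrib]

lemma idot_single {ι : Type*} [Fintype ι] [DecidableEq ι] (c : ι → ℤ) (i : ι) :
    idot c (Pi.single i 1) = c i := by
  simp [idot, Pi.single_apply]

/-- The Gram matrix of a family of integer vectors. -/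
def gram {ι κ : Type*} [Fintype ι] [Fintype κ] (v : κ → ι → ℤ) : Matrix κ κ ℤ :=
  Matrix.of fun a b => idot (v a) (v b)

lemma latDet_eq_gram {ι κ : Type*} [Fintype ι] [Fintype κ] [DecidableEq κ] (v : κ → ι → ℤ) :
    latDet v = Real.sqrt (((gram v).det : ℤ) : ℝ) := rfl

lemma gram_change {ι κ : Type*} [Fintype ι] [Fintype κ] [DecidableEq κ]
    (v w : κ → ι → ℤ) (C : Matrix κ κ ℤ) (h : ∀ j, v j = ∑ i, C i j • w i) :
    gram v = C.transpose * gram w * C := by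
  ext a b
  simp only [gram, Matrix.mul_apply, Matrix.transpose_apply, Matrix.of_apply, h,
    idot_sum_left, idot_sum_right, idot_smul, idot_smul_left, Finset.sum_mul,
    Finset.mul_sum]
  exact Finset.sum_congr rfl fun i _ => Finset.sum_congr rfl fun j _ => by
    ring

lemma detGram_change {ι κ : Type*} [Fintype ι] [Fintype κ] [DecidableEq κ]
    (v w : κ → ι → ℤ) (C : Matrix κ κ ℤ) (h : ∀ j, v j = ∑ i, C i j • w i) :
    (gram v).det = C.det ^ 2 * (gram w).det := by
  rw [gram_change v w C h]
  rw [Matrix.det_mul, Matrix.det_mul, Matrix.det_transpose]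
  ring

/-- `idot c ·` as a linear map. -/
def lmap {ι : Type*} [Fintype ι] (c : ι → ℤ) : (ι → ℤ) →ₗ[ℤ] ℤ where
  toFun y := idot c y
  map_add' a b := idot_add c a b
  map_smul' m a := by
    simp only [RingHom.id_apply, smul_eq_mul]
    exact idot_smul c m a

@[simp] lemma lmap_apply {ι : Type*} [Fintype ι] (c y : ι → ℤ) : lmap c y = idot c y := rfl

lemma exists_u {ι : Type*} [Fintype ι] [DecidableEq ι] (c : ι → ℤ)
    (hc : Finset.gcd Finset.univ c = 1) : ∃ u, idot c u = 1 := by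
  set I : Ideal ℤ := LinearMap.range (lmap c) with hI
  have hci : ∀ i, c i ∈ I := fun i => ⟨Pi.single i 1, idot_single c i⟩
  have hgen : Submodule.IsPrincipal.generator I ∣ 1 := by
    rw [← hc]
    exact Finset.dvd_gcd fun i _ =>
      (Submodule.IsPrincipal.mem_iff_generator_dvd I).mp (hci i)
  obtain ⟨t, ht⟩ := hgen
  obtain ⟨u₀, hu₀⟩ := Submodule.IsPrincipal.generator_mem I
  have hu₀' : idot c u₀ = Submodule.IsPrincipal.generator I := hu₀
  exact ⟨t • u₀, by rw [idot_smul, hu₀', mul_comm, ← ht]⟩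

lemma minor_dvd_idot {ι : Type*} [Fintype ι] [DecidableEq ι] (c d : ι → ℤ)
    (hc : Finset.gcd Finset.univ c = 1) (y : ι → ℤ) (hy : idot c y = 0) :
    minorGcd c d ∣ idot d y := by
  obtain ⟨u, hu⟩ := exists_u c hc
  have e1 : (∑ i, d i * y i) * (∑ j, c j * u j)
      = ∑ i, ∑ j, (y i * u j) * (c j * d i) := by
    rw [Finset.sum_mul_sum]
    exact Finset.sum_congr rfl fun i _ => Finset.sum_congr rfl fun j _ => by ring
  have e2 : (∑ i, c i * y i) * (∑ j, d j * u j)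
      = ∑ i, ∑ j, (y i * u j) * (c i * d j) := by
    rw [Finset.sum_mul_sum]
    exact Finset.sum_congr rfl fun i _ => Finset.sum_congr rfl fun j _ => by ring
  have key : idot d y = ∑ i, ∑ j, (y i * u j) * (c j * d i - c i * d j) := by
    have h1 : idot d y = (∑ i, d i * y i) * (∑ j, c j * u j)
        - (∑ i, c i * y i) * (∑ j, d j * u j) := by
      have hu' : (∑ j, c j * u j) = 1 := hu
      have hy' : (∑ i, c i * y i) = 0 := hy
      rw [hu', hy']
      simp [idot]
    rw [h1, e1, e2, ← Finset.sum_sub_distrib]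
    refine Finset.sum_congr rfl fun i _ => ?_
    rw [← Finset.sum_sub_distrib]
    exact Finset.sum_congr rfl fun j _ => by ring
  rw [key]
  refine Finset.dvd_sum fun i _ => Finset.dvd_sum fun j _ => Dvd.dvd.mul_left ?_ _
  exact Finset.gcd_dvd (Finset.mem_univ ((j, i) : ι × ι))

lemma exists_w {ι : Type*} [Fintype ι] [DecidableEq ι] (c d : ι → ℤ) :
    ∃ w, idot c w = 0 ∧ idot d w = minorGcd c d := by
  set J : Ideal ℤ := Submodule.map (lmap d) (LinearMap.ker (lmap c)) with hJ
  have hminor : ∀ p : ι × ι, (c p.1 * d p.2 - c p.2 * d p.1) ∈ J := by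
    intro p
    refine ⟨c p.1 • Pi.single p.2 1 - c p.2 • Pi.single p.1 1, ?_, ?_⟩
    · show idot c _ = 0
      rw [idot_sub', idot_smul, idot_smul, idot_single, idot_single]
      ring
    · show idot d _ = _
      rw [idot_sub', idot_smul, idot_smul, idot_single, idot_single]
  have hdvd : Submodule.IsPrincipal.generator J ∣ minorGcd c d :=
    Finset.dvd_gcd fun p _ =>
      (Submodule.IsPrincipal.mem_iff_generator_dvd J).mp (hminor p)
  obtain ⟨t, ht⟩ := hdvd
  obtain ⟨w₀, hw₀mem, hw₀⟩ := Submodule.IsPrincipal.generator_mem J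
  refine ⟨t • w₀, ?_, ?_⟩
  · rw [idot_smul]
    have h0 : idot c w₀ = 0 := hw₀mem
    rw [h0, mul_zero]
  · rw [idot_smul]
    have h1 : idot d w₀ = Submodule.IsPrincipal.generator J := hw₀
    rw [h1, mul_comm, ← ht]

lemma detGram_eq_sq {N : ℕ} {κ : Type*} [Fintype κ] [DecidableEq κ]
    (f : κ → Fin N → ℤ) (σ : Fin N ≃ κ) :
    (gram f).det = (Matrix.det (Matrix.of fun x j => f (σ j) x)) ^ 2 := by
  set M : Matrix (Fin N) (Fin N) ℤ := Matrix.of fun x j => f (σ j) x with hM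
  have h1 : (gram f).submatrix σ σ = M.transpose * M := by
    ext i j
    simp [gram, idot, Matrix.mul_apply, hM]
  calc (gram f).det = ((gram f).submatrix σ σ).det :=
        (Matrix.det_submatrix_equiv_self σ _).symm
    _ = (M.transpose * M).det := by rw [h1]
    _ = M.det ^ 2 := by rw [Matrix.det_mul, Matrix.det_transpose]; ring

lemma detGram_basis_one {N : ℕ} {κ : Type*} [Fintype κ] [DecidableEq κ]
    (B : Module.Basis κ ℤ (Fin N → ℤ)) (σ : Fin N ≃ κ) :
    (gram (fun j => B j)).det = 1 := by
  rw [detGram_eq_sq _ σ]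
  have hM : (Matrix.of fun x j => B (σ j) x)
      = (Pi.basisFun ℤ (Fin N)).toMatrix ⇑(B.reindex σ.symm) := by
    ext x j
    simp [Module.Basis.toMatrix_apply, Module.Basis.reindex_apply]
  rw [hM]
  have h := (Pi.basisFun ℤ (Fin N)).isUnit_det (B.reindex σ.symm)
  rw [Module.Basis.det_apply] at h
  rcases Int.isUnit_iff.mp h with h'|h' <;> rw [h'] <;> norm_num

lemma detGram_reindex {N : ℕ} {κ κ' : Type*} [Fintype κ] [DecidableEq κ]
    [Fintype κ'] [DecidableEq κ'] (v : κ → Fin N → ℤ) (e : κ' ≃ κ) :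
    (gram (v ∘ e)).det = (gram v).det := by
  have h : gram (v ∘ e) = (gram v).submatrix e e := rfl
  rw [h, Matrix.det_submatrix_equiv_self]

lemma detGram_basis_invariant {N : ℕ} {P : Submodule ℤ (Fin N → ℤ)} {κ : Type*}
    [Fintype κ] [DecidableEq κ] (b b' : Module.Basis κ ℤ ↥P) :
    (gram fun i => ((b i : Fin N → ℤ))).det
      = (gram fun i => ((b' i : Fin N → ℤ))).det := by
  set C := b'.toMatrix ⇑b with hC
  have hrel : ∀ j, (b j : Fin N → ℤ) = ∑ i, C i j • ((b' i : Fin N → ℤ)) := by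
    intro j
    have h1 := congrArg (Subtype.val) (b'.sum_repr (b j))
    rw [← h1]
    rw [AddSubmonoidClass.coe_finset_sum]
    exact Finset.sum_congr rfl fun i _ => by
      rw [SetLike.val_smul, hC, Module.Basis.toMatrix_apply]
  rw [detGram_change _ _ C hrel]
  have : Invertible C := b'.invertibleToMatrix b
  have h := Matrix.isUnit_det_of_invertible C
  rcases Int.isUnit_iff.mp h with h'|h' <;> rw [h'] <;> norm_num

lemma prim_ne_zero {ι : Type*} [Fintype ι] [Nonempty ι] (c : ι → ℤ)
    (hc : Finset.gcd Finset.univ c = 1) : c ≠ 0 := by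
  intro h0
  rw [h0] at hc
  have hz : Finset.gcd Finset.univ (0 : ι → ℤ) = 0 :=
    Finset.gcd_eq_zero_iff.mpr (fun x _ => rfl)
  rw [hz] at hc
  exact zero_ne_one hc

lemma idot_self_pos {ι : Type*} [Fintype ι] (c : ι → ℤ) (hc : c ≠ 0) :
    0 < idot c c := by
  have h1 : 0 ≤ idot c c := Finset.sum_nonneg fun i _ => mul_self_nonneg _
  rcases h1.eq_or_lt with h|h
  · exfalso
    apply hc
    funext i
    have := (Finset.sum_eq_zero_iff_of_nonneg
      (fun i _ => mul_self_nonneg (c i))).mp h.symm i (Finset.mem_univ i)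
    exact mul_self_eq_zero.mp this
  · exact h

lemma minorGcd_ne_zero {N : ℕ} (c d : Fin N → ℤ) (hN : 0 < N)
    (hc : Finset.gcd Finset.univ c = 1) (h : LinearIndependent ℤ ![c, d]) :
    minorGcd c d ≠ 0 := by
  intro h0
  have hall : ∀ p : (Fin N) × (Fin N), c p.1 * d p.2 - c p.2 * d p.1 = 0 := by
    intro p
    exact Finset.gcd_eq_zero_iff.mp h0 p (Finset.mem_univ p)
  haveI : Nonempty (Fin N) := ⟨⟨0, hN⟩⟩
  have hc0 : c ≠ 0 := prim_ne_zero c hc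
  obtain ⟨i₀, hi₀⟩ : ∃ i₀, c i₀ ≠ 0 := by
    by_contra hno
    push_neg at hno
    exact hc0 (funext fun i => hno i)
  have hrel : d i₀ • c - c i₀ • d = 0 := by
    funext j
    have := hall (i₀, j)
    simp only [Pi.sub_apply, Pi.smul_apply, smul_eq_mul, Pi.zero_apply]
    nlinarith [hall (i₀, j)]
  have hst := (LinearIndependent.pair_iff.mp h) (d i₀) (-(c i₀)) (by
    rw [neg_smul, ← sub_eq_add_neg]
    exact hrel)
  exact hi₀ (neg_eq_zero.mp hst.2)

lemma dvd_helper (G Q y : ℤ) (h1 : G ∣ y) (h2 : Q ∣ y) :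
    G * (Q / (Int.gcd G Q : ℤ)) ∣ y := by
  have h3 : (Int.lcm G Q : ℤ) ∣ y := Int.coe_lcm_dvd h1 h2
  refine (Int.natAbs_dvd).mp ?_
  convert h3 using 2
  rw [Int.natAbs_mul]
  have h4 : (Q / (Int.gcd G Q : ℤ)).natAbs = Q.natAbs / Int.gcd G Q := by
    rw [Int.natAbs_ediv_of_dvd (Int.gcd_dvd_right _ _)]
    simp
  rw [h4]
  have hl : Int.lcm G Q = G.natAbs * Q.natAbs / Nat.gcd G.natAbs Q.natAbs := rfl
  rw [hl, Nat.mul_div_assoc _ (Nat.gcd_dvd_right _ _)]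
  rfl

set_option maxHeartbeats 2000000 in
/-- Let `N ≥ 2`, `Q ≥ 1`, and `c, d ∈ ℤ^N` linearly independent and
primitive. The rank `N−1` lattice `{ y : ⟨c,y⟩ = 0, ⟨d,y⟩ ≡ 0 mod Q }` has determinant
`‖c‖ · Q / gcd(G(c,d), Q)`: for any `ℤ`-basis of it, the square root of the Gram
determinant of the basis equals this quantity. -/
theorem stmt4 (N : ℕ) (hN : 2 ≤ N) (Q : ℕ) (hQ : 1 ≤ Q) (c d : Fin N → ℤ)
    (hc : Finset.gcd Finset.univ c = 1) (hd : Finset.gcd Finset.univ d = 1)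
    (h : LinearIndependent ℤ ![c, d])
    (b : Module.Basis (Fin (N - 1)) ℤ ↥(latMix c d Q)) :
    latDet (fun i => ((b i : Fin N → ℤ))) =
      inorm c * (Q : ℝ) / (Int.gcd (minorGcd c d) (Q : ℤ) : ℝ) := by
  classical
  have hNpos : 0 < N := by omega
  haveI : Nonempty (Fin N) := ⟨⟨0, hNpos⟩⟩
  set G : ℤ := minorGcd c d with hGdef
  have hc0 : c ≠ 0 := prim_ne_zero c hc
  have hG : G ≠ 0 := minorGcd_ne_zero c d hNpos hc h
  have hQ0 : (Q : ℤ) ≠ 0 := by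
    exact_mod_cast (by omega : Q ≠ 0)
  obtain ⟨u, hu⟩ := exists_u c hc
  obtain ⟨w, hwc, hwd⟩ := exists_w c d
  have hdvd : ∀ y : Fin N → ℤ, idot c y = 0 → G ∣ idot d y := fun y hy =>
    minor_dvd_idot c d hc y hy
  set S : ℤ := idot c c with hSdef
  have hSpos : 0 < S := idot_self_pos c hc0
  -- the sublattice K = c^⊥ ∩ d^⊥
  set K : Submodule ℤ (Fin N → ℤ) := LinearMap.ker (lmap c) ⊓ LinearMap.ker (lmap d)
    with hKdef
  have memK : ∀ y, y ∈ K ↔ idot c y = 0 ∧ idot d y = 0 := by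
    intro y
    simp [hKdef, Submodule.mem_inf, LinearMap.mem_ker]
  set m := Module.finrank ℤ ↥K with hm
  set kb : Module.Basis (Fin m) ℤ ↥K := Module.finBasis ℤ ↥K with hkb
  set k : Fin m → Fin N → ℤ := fun i => ((kb i : Fin N → ℤ)) with hk
  have hkc : ∀ i, idot c (k i) = 0 := fun i => ((memK _).mp (kb i).2).1
  have hkd : ∀ i, idot d (k i) = 0 := fun i => ((memK _).mp (kb i).2).2
  have hkli : LinearIndependent ℤ k :=
    kb.linearIndependent.map' K.subtype K.ker_subtype
  have hkspan : Submodule.span ℤ (Set.range k) = K := by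
    have h1 : Set.range k = K.subtype '' Set.range ⇑kb := by
      rw [← Set.range_comp]; rfl
    rw [h1, Submodule.span_image, kb.span_eq, Submodule.map_top,
      Submodule.range_subtype]
  -- the family (k, w, u), a basis of ℤ^N
  set fam3 : ((Fin m ⊕ Unit) ⊕ Unit) → Fin N → ℤ :=
    Sum.elim (Sum.elim k fun _ => w) (fun _ => u) with hfam3
  have hli3 : LinearIndependent ℤ fam3 := by
    rw [Fintype.linearIndependent_iff]
    intro a ha
    rw [Fintype.sum_sum_type, Fintype.sum_sum_type] at ha
    simp only [hfam3, Sum.elim_inl, Sum.elim_inr, Finset.univ_unique,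
      Finset.sum_singleton] at ha
    have hc1 := congrArg (idot c) ha
    rw [idot_zero, idot_add, idot_add, idot_sum_right] at hc1
    simp only [idot_smul, hkc, hwc, hu, mul_zero, mul_one,
      Finset.sum_const_zero, zero_add] at hc1
    rw [hc1, zero_smul, add_zero] at ha
    have hd1 := congrArg (idot d) ha
    rw [idot_zero, idot_add, idot_sum_right] at hd1
    simp only [idot_smul, hkd, hwd, mul_zero, Finset.sum_const_zero,
      zero_add] at hd1
    have hibm : a (Sum.inl (Sum.inr ())) = 0 := by
      rcases mul_eq_zero.mp hd1 with h'|h'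
      · exact h'
      · exact absurd h' hG
    rw [hibm, zero_smul, add_zero] at ha
    have hk0 := Fintype.linearIndependent_iff.mp hkli _ ha
    rintro ((i | ⟨⟩) | ⟨⟩)
    · exact hk0 i
    · exact hibm
    · exact hc1
  have hsp3 : ⊤ ≤ Submodule.span ℤ (Set.range fam3) := by
    intro y _
    have hy1 : idot c (y - idot c y • u) = 0 := by
      rw [idot_sub', idot_smul, hu]; ring
    obtain ⟨t, ht⟩ := hdvd _ hy1
    have hz : (y - idot c y • u - t • w) ∈ K := by
      rw [memK]
      constructor
      · rw [idot_sub', idot_smul, hwc, hy1]; ring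
      · rw [idot_sub', idot_smul, hwd, ht]; ring
    have hzsp : (y - idot c y • u - t • w) ∈ Submodule.span ℤ (Set.range fam3) := by
      rw [← hkspan] at hz
      refine Submodule.span_mono ?_ hz
      rintro _ ⟨i, rfl⟩
      exact ⟨Sum.inl (Sum.inl i), rfl⟩
    have hwsp : w ∈ Submodule.span ℤ (Set.range fam3) :=
      Submodule.subset_span ⟨Sum.inl (Sum.inr ()), rfl⟩
    have husp : u ∈ Submodule.span ℤ (Set.range fam3) :=
      Submodule.subset_span ⟨Sum.inr (), rfl⟩
    have hyeq : y = (y - idot c y • u - t • w) + t • w + idot c y • u := by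
      abel
    rw [hyeq]
    exact add_mem (add_mem hzsp (Submodule.smul_mem _ t hwsp))
      (Submodule.smul_mem _ _ husp)
  set B3 : Module.Basis ((Fin m ⊕ Unit) ⊕ Unit) ℤ (Fin N → ℤ) := Module.Basis.mk hli3 hsp3
    with hB3
  have hB3coe : ⇑B3 = fam3 := Module.Basis.coe_mk _ _
  -- cardinality
  have hNm : N = m + 2 := by
    have h1 : Module.finrank ℤ (Fin N → ℤ)
        = Fintype.card ((Fin m ⊕ Unit) ⊕ Unit) := Module.finrank_eq_card_basis B3
    simp at h1
    omega
  have hcard3 : Fintype.card (Fin N) = Fintype.card ((Fin m ⊕ Unit) ⊕ Unit) := by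
    simp
    omega
  set σ : Fin N ≃ ((Fin m ⊕ Unit) ⊕ Unit) := Fintype.equivOfCardEq hcard3 with hσ
  have hdet3 : (gram fam3).det = 1 := by
    have h1 := detGram_basis_one B3 σ
    rw [show (fun j => B3 j) = fam3 from funext fun j => by rw [← hB3coe]] at h1
    exact h1
  -- coordinate of c on u
  have hrepr : B3.repr c (Sum.inr ()) = S := by
    have hcsum := B3.sum_repr c
    have h1 := congrArg (idot c) hcsum
    rw [idot_sum_right] at h1
    simp only [idot_smul] at h1
    rw [Fintype.sum_sum_type, Fintype.sum_sum_type] at h1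
    simp only [hB3coe, hfam3, Sum.elim_inl, Sum.elim_inr, hkc, hwc, hu, mul_zero,
      mul_one, Finset.sum_const_zero, zero_add, Finset.univ_unique,
      Finset.sum_singleton, add_zero] at h1
    rw [← hSdef] at h1
    exact h1
  -- the family (k, w, c)
  set fam3c : ((Fin m ⊕ Unit) ⊕ Unit) → Fin N → ℤ :=
    Sum.elim (Sum.elim k fun _ => w) (fun _ => c) with hfam3c
  set C : Matrix ((Fin m ⊕ Unit) ⊕ Unit) ((Fin m ⊕ Unit) ⊕ Unit) ℤ :=
    Matrix.fromBlocks 1 (Matrix.of fun i _ => B3.repr c (Sum.inl i)) 0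
      (Matrix.of fun _ _ => B3.repr c (Sum.inr ())) with hCdef
  have hrel3 : ∀ j, fam3c j = ∑ i, C i j • fam3 i := by
    rintro (j | ⟨⟩)
    · rw [Fintype.sum_sum_type]
      simp only [hCdef, Matrix.fromBlocks_apply₁₁, Matrix.fromBlocks_apply₂₁,
        Matrix.zero_apply, zero_smul, Finset.sum_const_zero, add_zero,
        Matrix.one_apply, ite_smul, one_smul]
      rw [Finset.sum_ite_eq' Finset.univ j fun i => fam3 (Sum.inl i)]
      simp [hfam3c, hfam3]
    · rw [Fintype.sum_sum_type]
      simp only [hCdef, Matrix.fromBlocks_apply₁₂, Matrix.fromBlocks_apply₂₂,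
        Matrix.of_apply]
      have h2 := B3.sum_repr c
      rw [Fintype.sum_sum_type] at h2
      simp only [hB3coe] at h2
      simp only [Finset.univ_unique, Finset.sum_singleton] at h2 ⊢
      exact h2.symm
  have hdet_unit : ∀ z : ℤ, (Matrix.of fun (_ _ : Unit) => z).det = z :=
    fun z => Matrix.det_unique _
  have hdetC : C.det = S := by
    rw [hCdef, Matrix.det_fromBlocks_zero₂₁, Matrix.det_one, one_mul,
      hdet_unit]
    exact hrepr
  have hgram3c : (gram fam3c).det = S ^ 2 := by
    rw [detGram_change _ _ C hrel3, hdetC, hdet3, mul_one]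
  -- block structure
  set fam2 : (Fin m ⊕ Unit) → Fin N → ℤ := Sum.elim k fun _ => w with hfam2
  have hblock : gram fam3c
      = Matrix.fromBlocks (gram fam2) 0 0 (Matrix.of fun _ _ => S) := by
    ext (i | ⟨⟩) (j | ⟨⟩)
    · rfl
    · show idot (fam2 i) c = 0
      rw [idot_comm]
      rcases i with i | ⟨⟩
      · exact hkc i
      · exact hwc
    · show idot c (fam2 j) = 0
      rcases j with j | ⟨⟩
      · exact hkc j
      · exact hwc
    · rfl
  have hgram2 : (gram fam2).det = S := by
    have h1 : (gram fam3c).det = (gram fam2).det * S := by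
      rw [hblock, Matrix.det_fromBlocks_zero₂₁, hdet_unit]
    have h2 : (gram fam2).det * S = S * S := by
      rw [← h1, hgram3c]; ring
    exact mul_right_cancel₀ hSpos.ne' h2
  -- arithmetic of Q' and g
  set gz : ℤ := (Int.gcd G (Q : ℤ) : ℤ) with hgz
  have hgz0 : gz ≠ 0 := by
    simp only [hgz, ne_eq, Int.natCast_eq_zero]
    rw [Int.gcd_eq_zero_iff]
    push_neg
    intro h'
    exact absurd h' hG
  set Q'z : ℤ := (Q : ℤ) / gz with hQ'z
  have hgzQ : gz * Q'z = (Q : ℤ) := Int.mul_ediv_cancel' (Int.gcd_dvd_right _ _)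
  have hQ'0 : Q'z ≠ 0 := by
    intro h0
    rw [h0, mul_zero] at hgzQ
    exact hQ0 hgzQ.symm
  have hQ'nonneg : 0 ≤ Q'z := Int.ediv_nonneg (by positivity) (by positivity)
  obtain ⟨Gz', hGz'⟩ : gz ∣ G := Int.gcd_dvd_left _ _
  have hQdvdQ'G : (Q : ℤ) ∣ Q'z * G := ⟨Gz', by rw [hGz', ← hgzQ]; ring⟩
  -- the family (k, Q'·w), a basis of the lattice Λ
  set famΛ : (Fin m ⊕ Unit) → Fin N → ℤ := Sum.elim k (fun _ => Q'z • w)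
    with hfamΛ
  set C2 : Matrix (Fin m ⊕ Unit) (Fin m ⊕ Unit) ℤ :=
    Matrix.diagonal (Sum.elim (fun _ => 1) (fun _ => Q'z)) with hC2
  have hrel2 : ∀ j, famΛ j = ∑ i, C2 i j • fam2 i := by
    intro j
    rw [Finset.sum_eq_single j]
    · rcases j with j | ⟨⟩ <;>
        simp [hC2, Matrix.diagonal_apply_eq, hfamΛ, hfam2]
    · intro i _ hij
      rw [hC2, Matrix.diagonal_apply_ne _ hij, zero_smul]
    · intro hj
      exact absurd (Finset.mem_univ j) hj
  have hdetC2 : C2.det = Q'z := by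
    rw [hC2, Matrix.det_diagonal, Fintype.prod_sum_type]
    simp
  have hgramΛ : (gram famΛ).det = Q'z ^ 2 * S := by
    rw [detGram_change _ _ C2 hrel2, hdetC2, hgram2]
  -- famΛ spans the lattice
  have hmemΛ : ∀ j, famΛ j ∈ latMix c d Q := by
    rintro (i | ⟨⟩)
    · exact ⟨hkc i, by rw [show famΛ (Sum.inl i) = k i from rfl, hkd i]; exact dvd_zero _⟩
    · refine ⟨by rw [show famΛ (Sum.inr ()) = Q'z • w from rfl, idot_smul, hwc,
        mul_zero], ?_⟩
      rw [show famΛ (Sum.inr ()) = Q'z • w from rfl, idot_smul, hwd]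
      exact hQdvdQ'G
  have hspanΛ : Submodule.span ℤ (Set.range famΛ) = latMix c d Q := by
    apply le_antisymm
    · rw [Submodule.span_le]
      rintro _ ⟨j, rfl⟩
      exact hmemΛ j
    · intro y hy
      obtain ⟨hyc, hyQ⟩ : idot c y = 0 ∧ (Q : ℤ) ∣ idot d y := hy
      have hlcm : Q'z * G ∣ idot d y := by
        have h1 : G * ((Q : ℤ) / (Int.gcd G (Q : ℤ) : ℤ)) ∣ idot d y :=
          dvd_helper G (Q : ℤ) _ (hdvd y hyc) hyQ
      
        rw [mul_comm] at h1
        exact h1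
      obtain ⟨t, ht⟩ := hlcm
      have hz : y - t • (Q'z • w) ∈ K := by
        rw [memK]
        constructor
        · rw [idot_sub', idot_smul, idot_smul, hwc, hyc]; ring
        · rw [idot_sub', idot_smul, idot_smul, hwd, ht]; ring
      have hzsp : y - t • (Q'z • w) ∈ Submodule.span ℤ (Set.range famΛ) := by
        rw [← hkspan] at hz
        refine Submodule.span_mono ?_ hz
        rintro _ ⟨i, rfl⟩
        exact ⟨Sum.inl i, rfl⟩
      have hwsp : (Q'z • w) ∈ Submodule.span ℤ (Set.range famΛ) :=
        Submodule.subset_span ⟨Sum.inr (), rfl⟩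
      have hyeq : y = (y - t • (Q'z • w)) + t • (Q'z • w) := by abel
      rw [hyeq]
      exact add_mem hzsp (Submodule.smul_mem _ t hwsp)
  have hliΛ : LinearIndependent ℤ famΛ := by
    rw [Fintype.linearIndependent_iff]
    intro a ha
    rw [Fintype.sum_sum_type] at ha
    simp only [hfamΛ, Sum.elim_inl, Sum.elim_inr, Finset.univ_unique,
      Finset.sum_singleton] at ha
    have hd1 := congrArg (idot d) ha
    rw [idot_zero, idot_add, idot_sum_right] at hd1
    simp only [idot_smul, hkd, hwd, mul_zero, Finset.sum_const_zero,
      zero_add] at hd1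
    have hainr : a (Sum.inr ()) = 0 := by
      rcases mul_eq_zero.mp hd1 with h' | h'
      · exact h'
      · exact absurd h' (mul_ne_zero hQ'0 hG)
    rw [hainr, zero_smul, add_zero] at ha
    have hk0 := Fintype.linearIndependent_iff.mp hkli _ ha
    rintro (i | ⟨⟩)
    · exact hk0 i
    · exact hainr
  set bΛ0 : Module.Basis (Fin m ⊕ Unit) ℤ ↥(Submodule.span ℤ (Set.range famΛ)) :=
    Module.Basis.span hliΛ with hbΛ0
  set bΛ : Module.Basis (Fin m ⊕ Unit) ℤ ↥(latMix c d Q) :=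
    bΛ0.map (LinearEquiv.ofEq _ _ hspanΛ) with hbΛ
  have hbΛcoe : ∀ j, (bΛ j : Fin N → ℤ) = famΛ j := by
    intro j
    rw [hbΛ, Module.Basis.map_apply]
    have h1 : ((bΛ0 j : Fin N → ℤ)) = famΛ j := by
      rw [hbΛ0]; exact congrArg Subtype.val (Module.Basis.span_apply hliΛ j)
    rw [← h1]
    rfl
  -- transfer to the given basis b
  have hcardΛ : Fintype.card (Fin (N - 1)) = Fintype.card (Fin m ⊕ Unit) := by
    simp
    omega
  set e : Fin (N - 1) ≃ (Fin m ⊕ Unit) := Fintype.equivOfCardEq hcardΛ with he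
  have hfinal : (gram fun i => ((b i : Fin N → ℤ))).det = Q'z ^ 2 * S := by
    rw [detGram_basis_invariant b (bΛ.reindex e.symm)]
    have hco : (fun i => (((bΛ.reindex e.symm) i : Fin N → ℤ)))
        = (fun j => ((bΛ j : Fin N → ℤ))) ∘ e := by
      funext i
      rw [Module.Basis.reindex_apply]
      simp
    rw [hco, detGram_reindex]
    have h2 : (fun j => ((bΛ j : Fin N → ℤ))) = famΛ := funext hbΛcoe
    rw [h2, hgramΛ]
  -- final real computation
  rw [latDet_eq_gram, hfinal]
  have hScast : Real.sqrt ((S : ℤ) : ℝ) = inorm c := by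
    have : ((S : ℤ) : ℝ) = ∑ i, (c i : ℝ) ^ 2 := by
      rw [hSdef]
      push_cast [idot]
      exact Finset.sum_congr rfl fun i _ => by ring
    rw [this, inorm]
  have hsqrt : Real.sqrt ((Q'z ^ 2 * S : ℤ) : ℝ) = (Q'z : ℝ) * inorm c := by
    have h1 : ((Q'z ^ 2 * S : ℤ) : ℝ) = ((Q'z : ℝ)) ^ 2 * (((S : ℤ)) : ℝ) := by
      push_cast
      ring
    rw [h1, Real.sqrt_mul (sq_nonneg _),
      Real.sqrt_sq (show (0:ℝ) ≤ (Q'z : ℝ) by exact_mod_cast hQ'nonneg), hScast]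
  rw [hsqrt]
  have hgcast : ((Int.gcd (minorGcd c d) (Q : ℤ) : ℕ) : ℝ) = (gz : ℝ) := by
    rw [hgz, hGdef]
    push_cast
    ring
  rw [hgcast]
  have hQcast : (Q : ℝ) = (gz : ℝ) * (Q'z : ℝ) := by
    exact_mod_cast congrArg (fun z : ℤ => (z : ℝ)) hgzQ.symm
  rw [hQcast]
  have hgz0' : (gz : ℝ) ≠ 0 := by exact_mod_cast hgz0
  field_simp
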